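/- arXiv:1605.07484 — 4 statements merged into one kernel-verified Lean document; each statement's English description precedes it below -/
import Mathlib

section
/- Let w ∈ H^1(ℝ^3) be radially symmetric, continuous, nonnegative, and satisfy −Δw + q(x) w = 0 in ℝ^3 where q(x) ≥ |λ|/2 > 0 for |x| > M. Then there exist α > 0 and γ ∈ (0, |λ|/2) such that w(x) ≤ α e^{−√(1 + γ|x|^2)} for every x ∈ ℝ^3. -/
open MeasureTheory Real Filter

noncomputable section

abbrev E3 := EuclideanSpace ℝ (Fin 3)

/-- The Laplacian of `w : ℝ³ → ℝ`, as the sum of the pure second derivatives. -/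
def lap (w : E3 → ℝ) (x : E3) : ℝ :=
  ∑ i : Fin 3,
    fderiv ℝ (fun y => fderiv ℝ w y (EuclideanSpace.single i 1)) x (EuclideanSpace.single i 1)

lemma notL2 (w : E3 → ℝ) (R : ℝ) (h : ∀ x : E3, R ≤ ‖x‖ → 1 ≤ w x) :
    ¬ MemLp w 2 volume := by
  intro hw
  set S : Set E3 := (Metric.closedBall (0:E3) R)ᶜ with hS
  have hSm : MeasurableSet S := (measurableSet_closedBall).compl
  have hvol : volume S = ⊤ := by
    by_contra hfin
    have h1 : volume (Set.univ : Set E3) ≤ volume (Metric.closedBall (0:E3) R) + volume S := by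
      rw [← Set.union_compl_self (Metric.closedBall (0:E3) R)]
      exact measure_union_le _ _
    rw [measure_univ_of_isAddLeftInvariant (μ := (volume : Measure E3))] at h1
    have h2 : volume (Metric.closedBall (0:E3) R) + volume S < ⊤ :=
      ENNReal.add_lt_top.2 ⟨measure_closedBall_lt_top, lt_top_iff_ne_top.2 hfin⟩
    exact (lt_irrefl _ (h1.trans_lt h2)).elim
  have hrestr : MemLp w 2 (volume.restrict S) := hw.restrict S
  have hone : MemLp (fun _ : E3 => (1:ℝ)) 2 (volume.restrict S) := by
    refine hrestr.of_le aestronglyMeasurable_const ?_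
    rw [ae_restrict_iff' hSm]
    refine Filter.Eventually.of_forall (fun x hx => ?_)
    have hx' : R ≤ ‖x‖ := by
      simp only [hS, Set.mem_compl_iff, Metric.mem_closedBall, dist_zero_right, not_le] at hx
      exact hx.le
    have := h x hx'
    simp only [norm_one, Real.norm_eq_abs]
    rw [abs_of_nonneg (le_trans zero_le_one this)]
    exact this
  have := hone.2
  rw [eLpNorm_const (1:ℝ) (by norm_num) (by
    intro h0
    rw [Measure.restrict_eq_zero] at h0
    rw [h0] at hvol
    simp at hvol)] at this
  rw [Measure.restrict_apply_univ, hvol] at this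
  simp at this

def e3 (i : Fin 3) : E3 := EuclideanSpace.single i 1

lemma norm_e3 (i : Fin 3) : ‖e3 i‖ = 1 := by
  simp [e3, EuclideanSpace.norm_single]

lemma norm_comb (r t : ℝ) (i : Fin 3) (hi : i ≠ 0) :
    ‖r • e3 0 + t • e3 i‖ = Real.sqrt (r^2 + t^2) := by
  have h1 : ‖r • e3 0 + t • e3 i‖^2 = r^2 + t^2 := by
    rw [norm_add_sq_real]
    have hinner : inner ℝ (r • e3 0) (t • e3 i) = (0:ℝ) := by
      simp only [e3, real_inner_smul_left, real_inner_smul_right,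
        EuclideanSpace.inner_single_left, EuclideanSpace.single_apply]
      simp [hi.symm]
    rw [hinner]
    simp [norm_smul, norm_e3, mul_pow, sq_abs]
  rw [← h1, Real.sqrt_sq (norm_nonneg _)]

lemma deriv_at_zero_of_odd (g : ℝ → ℝ) (hg : ContinuousAt g 0) :
    HasDerivAt (fun t => g (t^2) * (2*t)) (2 * g 0) 0 := by
  rw [hasDerivAt_iff_tendsto_slope]
  have h2 : Tendsto (fun t : ℝ => t^2) (nhds 0) (nhds 0) := by
    simpa using (continuous_pow 2 (M := ℝ)).tendsto 0
  have h3 : Tendsto (fun t : ℝ => 2 * g (t^2)) (nhds 0) (nhds (2 * g 0)) :=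
    (tendsto_const_nhds.mul (hg.tendsto.comp h2))
  have h0 : Tendsto (fun t : ℝ => 2 * g (t^2)) (nhdsWithin 0 {(0:ℝ)}ᶜ) (nhds (2 * g 0)) :=
    h3.mono_left nhdsWithin_le_nhds
  refine h0.congr' ?_
  filter_upwards [self_mem_nhdsWithin] with t ht
  have ht' : t ≠ 0 := by simpa using ht
  simp only [slope_def_field]
  field_simp
  ring

section Radial
variable (w : E3 → ℝ)

lemma lap_radial (hw : ContDiff ℝ 2 w)
    (hrad : ∀ x y : E3, ‖x‖ = ‖y‖ → w x = w y) (r : ℝ) (hr : 0 < r) :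
    lap w (r • e3 0) =
      deriv (deriv (fun s => w (s • e3 0))) r
        + 2 * (deriv (fun s => w (s • e3 0)) r / r) := by
  set f : ℝ → ℝ := fun s => w (s • e3 0) with hf
  have hwd : Differentiable ℝ w := hw.differentiable (by norm_num)
  have hfC2 : ContDiff ℝ 2 f := hw.comp (contDiff_id.smul contDiff_const)
  have hfd : Differentiable ℝ f := hfC2.differentiable (by norm_num)
  have hdfC1 : ContDiff ℝ 1 (deriv f) := by
    have := (contDiff_succ_iff_deriv (n := 1) (f := f)).1 (by norm_num at hfC2 ⊢; exact hfC2)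
    exact this.2.2
  have hdfd : Differentiable ℝ (deriv f) := hdfC1.differentiable one_ne_zero
  -- differentiability of y ↦ fderiv w y v
  have hgC1 : ∀ v : E3, ContDiff ℝ 1 (fun y => fderiv ℝ w y v) := by
    intro v
    have h1 : ContDiff ℝ 1 (fderiv ℝ w) := hw.fderiv_right (by norm_num)
    exact (ContinuousLinearMap.apply ℝ ℝ v).contDiff.comp h1
  -- the line map
  have hline : ∀ (x v : E3) (t : ℝ), HasDerivAt (fun s : ℝ => x + s • v) v t := by
    intro x v t
    simpa using ((hasDerivAt_id t).smul_const v).const_add x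
  -- first derivative along a line
  have hphi : ∀ (x v : E3) (t : ℝ),
      HasDerivAt (fun s => w (x + s • v)) (fderiv ℝ w (x + t • v) v) t := by
    intro x v t
    exact (hwd (x + t • v)).hasFDerivAt.comp_hasDerivAt t (hline x v t)
  -- second derivative along a line at 0 equals the lap entry
  have hsecond : ∀ (x v : E3),
      HasDerivAt (fun t : ℝ => fderiv ℝ w (x + t • v) v)
        (fderiv ℝ (fun y => fderiv ℝ w y v) x v) (0:ℝ) := by
    intro x v
    have hd : DifferentiableAt ℝ (fun y => fderiv ℝ w y v) (x + (0:ℝ) • v) :=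
      ((hgC1 v).differentiable one_ne_zero) _
    have h1 := hd.hasFDerivAt.comp_hasDerivAt (0:ℝ) (hline x v 0)
    rw [show x + (0:ℝ) • v = x from by simp] at h1
    exact h1
  -- axial: fderiv w (s • e3 0) (e3 0) = deriv f s
  have haxial : ∀ s : ℝ, fderiv ℝ w (s • e3 0) (e3 0) = deriv f s := by
    intro s
    have h1 : HasDerivAt f (fderiv ℝ w ((0:E3) + s • e3 0) (e3 0)) s := by
      have := hphi 0 (e3 0) s
      simpa [hf] using this
    rw [show (0:E3) + s • e3 0 = s • e3 0 by simp] at h1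
    exact h1.deriv.symm
  -- entry for i = 0
  have entry0 : fderiv ℝ (fun y => fderiv ℝ w y (e3 0)) (r • e3 0) (e3 0)
      = deriv (deriv f) r := by
    have hA := hsecond (r • e3 0) (e3 0)
    have hfuneq : (fun t : ℝ => fderiv ℝ w (r • e3 0 + t • e3 0) (e3 0))
        = fun t => deriv f (r + t) := by
      funext t
      rw [show r • e3 0 + t • e3 0 = (r + t) • e3 0 by rw [add_smul], haxial]
    rw [hfuneq] at hA
    have hB : HasDerivAt (fun t => deriv f (r + t)) (deriv (deriv f) r) 0 := by
      have h2 : HasDerivAt (fun t : ℝ => r + t) 1 0 := by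
        simpa using (hasDerivAt_id (0:ℝ)).const_add r
      have h3 := ((hdfd (r + 0)).hasDerivAt).comp 0 h2
      exact h3.congr_deriv (by simp)
    exact hA.unique hB
  -- entries for i ≠ 0
  have entryi : ∀ i : Fin 3, i ≠ 0 →
      fderiv ℝ (fun y => fderiv ℝ w y (e3 i)) (r • e3 0) (e3 i) = deriv f r / r := by
    intro i hi
    set G : ℝ → ℝ := fun s => deriv f (Real.sqrt (r^2 + s)) * (2 * Real.sqrt (r^2 + s))⁻¹
      with hG
    have hsq : ∀ t : ℝ, (0:ℝ) < r^2 + t^2 := fun t => by positivity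
    have hsqrtpos : ∀ t : ℝ, 0 < Real.sqrt (r^2 + t^2) := fun t =>
      Real.sqrt_pos.2 (hsq t)
    -- w on the plane equals f ∘ sqrt
    have hplane : ∀ t : ℝ, w (r • e3 0 + t • e3 i) = f (Real.sqrt (r^2 + t^2)) := by
      intro t
      apply hrad
      rw [norm_comb r t i hi]
      have h4 : ‖Real.sqrt (r^2+t^2) • e3 0‖ = |Real.sqrt (r^2+t^2)| * ‖e3 0‖ := by
        rw [norm_smul]; rfl
      rw [h4, norm_e3, mul_one, abs_of_nonneg (Real.sqrt_nonneg _)]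
    -- derivative of the plane restriction
    have hphival : ∀ t : ℝ,
        HasDerivAt (fun t => w (r • e3 0 + t • e3 i)) (G (t^2) * (2*t)) t := by
      intro t
      have hu : HasDerivAt (fun t : ℝ => Real.sqrt (r^2 + t^2))
          (1 / (2 * Real.sqrt (r^2 + t^2)) * (2*t)) t := by
        have h5 : HasDerivAt (fun t : ℝ => r^2 + t^2) (2*t) t := by
          simpa using (hasDerivAt_pow 2 t).const_add (r^2)
        exact (Real.hasDerivAt_sqrt (hsq t).ne').comp t h5
      have h6 := ((hfd _).hasDerivAt).comp t hu
      have h7 : (fun t => w (r • e3 0 + t • e3 i)) = fun t => f (Real.sqrt (r^2 + t^2)) := by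
        funext s; exact hplane s
      rw [h7]
      have : deriv f (Real.sqrt (r^2 + t^2)) * (1 / (2 * Real.sqrt (r^2 + t^2)) * (2*t))
          = G (t^2) * (2*t) := by
        rw [hG]; ring
      rw [← this]
      exact h6
    -- identification of the first derivative
    have hident : ∀ t : ℝ,
        fderiv ℝ w (r • e3 0 + t • e3 i) (e3 i) = G (t^2) * (2*t) := by
      intro t
      exact (hphi (r • e3 0) (e3 i) t).unique (hphival t)
    -- continuity of G at 0
    have hGcont : ContinuousAt G 0 := by
      have hsc : Continuous (fun s : ℝ => Real.sqrt (r^2 + s)) :=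
        Real.continuous_sqrt.comp (continuous_const.add continuous_id)
      have h8 : ContinuousAt (fun s : ℝ => deriv f (Real.sqrt (r^2 + s))) 0 :=
        (hdfC1.continuous.comp hsc).continuousAt
      have h9 : ContinuousAt (fun s : ℝ => (2 * Real.sqrt (r^2 + s))⁻¹) 0 := by
        apply ContinuousAt.inv₀ (by fun_prop)
        have : Real.sqrt (r^2 + 0) = r := by
          rw [add_zero, Real.sqrt_sq hr.le]
        rw [this]; positivity
      exact h8.mul h9
    have hB := deriv_at_zero_of_odd G hGcont
    have hA := hsecond (r • e3 0) (e3 i)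
    rw [show (fun t : ℝ => fderiv ℝ w (r • e3 0 + t • e3 i) (e3 i))
        = fun t => G (t^2) * (2*t) from funext hident] at hA
    rw [hA.unique hB, hG]
    have h10 : Real.sqrt (r^2 + 0) = r := by rw [add_zero, Real.sqrt_sq hr.le]
    simp only [h10]
    field_simp
  -- assemble
  have : lap w (r • e3 0) = ∑ i : Fin 3,
      fderiv ℝ (fun y => fderiv ℝ w y (e3 i)) (r • e3 0) (e3 i) := rfl
  rw [this, Fin.sum_univ_three, entry0, entryi 1 (by decide), entryi 2 (by decide)]
  ring

end Radial

lemma ode_decay (f : ℝ → ℝ) (k M₀ : ℝ) (hk : 0 < k)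
    (hfd : Differentiable ℝ f) (hdfd : Differentiable ℝ (deriv f))
    (hode : ∀ r, M₀ < r → k^2 * (r * f r) ≤ 2 * deriv f r + r * deriv (deriv f) r)
    (hsmall : ∀ R : ℝ, ∃ r, R ≤ r ∧ f r < 1) :
    ∀ r, M₀ ≤ r → r * f r ≤ (M₀ * f M₀ * Real.exp (k * M₀)) * Real.exp (-(k*r)) := by
  set g : ℝ → ℝ := fun r => r * f r with hgdef
  set g1 : ℝ → ℝ := fun r => f r + r * deriv f r with hg1def
  set g2 : ℝ → ℝ := fun r => 2 * deriv f r + r * deriv (deriv f) r with hg2def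
  have hg : ∀ r, HasDerivAt g (g1 r) r := by
    intro r
    have := (hasDerivAt_id r).mul (hfd r).hasDerivAt
    exact this.congr_deriv (by simp [hg1def])
  have hg1 : ∀ r, HasDerivAt g1 (g2 r) r := by
    intro r
    have h1 := ((hfd r).hasDerivAt).add ((hasDerivAt_id r).mul (hdfd r).hasDerivAt)
    exact h1.congr_deriv (by simp only [hg2def, id, one_mul]; ring)
  have hexp : ∀ (a : ℝ) (r : ℝ), HasDerivAt (fun r => Real.exp (a*r)) (a * Real.exp (a*r)) r := by
    intro a r
    have h1 : HasDerivAt (fun r : ℝ => a * r) a r := by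
      simpa using (hasDerivAt_id r).const_mul a
    exact ((Real.hasDerivAt_exp (a*r)).comp r h1).congr_deriv (by ring)
  set Q : ℝ → ℝ := fun r => (g1 r + k * g r) * Real.exp (-(k*r)) with hQdef
  have hQd : ∀ r, HasDerivAt Q ((g2 r - k^2 * g r) * Real.exp (-(k*r))) r := by
    intro r
    have h1 := ((hg1 r).add ((hg r).const_mul k)).mul
      (by simpa [neg_mul] using hexp (-k) r : HasDerivAt (fun r => Real.exp (-(k*r))) (-k * Real.exp (-(k*r))) r)
    exact h1.congr_deriv (by simp only [Pi.add_apply]; ring)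
  have hQmono : MonotoneOn Q (Set.Ici M₀) := by
    apply monotoneOn_of_deriv_nonneg (convex_Ici M₀)
    · exact fun r _ => ((hQd r).differentiableAt).continuousAt.continuousWithinAt
    · exact fun r _ => ((hQd r).differentiableAt).differentiableWithinAt
    · intro r hr
      rw [interior_Ici] at hr
      rw [(hQd r).deriv]
      have h2 : 0 ≤ g2 r - k^2 * g r := by
        have := hode r hr
        simp only [hg2def, hgdef]
        linarith
      positivity
  have hQnonpos : ∀ r, M₀ ≤ r → Q r ≤ 0 := by
    by_contra hcon
    push_neg at hcon
    obtain ⟨r₁, hr₁M, hr₁pos⟩ := hcon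
    set c := Q r₁ with hc
    have hQge : ∀ r, r₁ ≤ r → c ≤ Q r := fun r hr =>
      hQmono (Set.mem_Ici.2 hr₁M) (Set.mem_Ici.2 (hr₁M.trans hr)) hr
    set H : ℝ → ℝ := fun r => g r * Real.exp (k*r) - (c/(2*k)) * Real.exp (2*(k*r)) with hHdef
    have hHd : ∀ r, HasDerivAt H ((Q r - c) * Real.exp (2*(k*r))) r := by
      intro r
      have he : HasDerivAt (fun r => Real.exp (2*(k*r))) ((2*k) * Real.exp (2*(k*r))) r := by
        have := hexp (2*k) r
        simpa [mul_assoc] using this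
      have h1 := (((hg r).mul (hexp k r)).sub (he.const_mul (c/(2*k))))
      refine h1.congr_deriv ?_
      simp only [hQdef]
      rw [Real.exp_neg, show (2*(k*r)) = k*r + k*r by ring, Real.exp_add]
      field_simp
    have hHmono : MonotoneOn H (Set.Ici r₁) := by
      apply monotoneOn_of_deriv_nonneg (convex_Ici r₁)
      · exact fun r _ => ((hHd r).differentiableAt).continuousAt.continuousWithinAt
      · exact fun r _ => ((hHd r).differentiableAt).differentiableWithinAt
      · intro r hr
        rw [interior_Ici] at hr
        rw [(hHd r).deriv]
        have := hQge r hr.le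
        have := Real.exp_pos (2*(k*r))
        nlinarith
    have hfge : ∀ r, max r₁ 1 ≤ r →
        (c/(2*k)) * (Real.exp (k*r) / r) + (-(|H r₁|)) / r ≤ f r := by
      intro r hr
      have hr1 : r₁ ≤ r := (le_max_left _ _).trans hr
      have hrpos : (0:ℝ) < r := lt_of_lt_of_le one_pos ((le_max_right _ _).trans hr)
      have h3 : H r₁ ≤ H r := hHmono (Set.mem_Ici.2 le_rfl) (Set.mem_Ici.2 hr1) hr1
      have h4 : (c/(2*k)) * Real.exp (2*(k*r)) + H r₁ ≤ g r * Real.exp (k*r) := by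
        simp only [hHdef] at h3 ⊢; linarith
      have hekr := Real.exp_pos (k*r)
      have he1 : Real.exp (2*(k*r)) = Real.exp (k*r) * Real.exp (k*r) := by
        rw [← Real.exp_add]; ring_nf
      have h5 : c/(2*k) * Real.exp (k*r) + H r₁ / Real.exp (k*r) ≤ g r := by
        apply le_of_mul_le_mul_right _ hekr
        have heq : (c/(2*k) * Real.exp (k*r) + H r₁ / Real.exp (k*r)) * Real.exp (k*r)
            = c/(2*k) * (Real.exp (k*r) * Real.exp (k*r)) + H r₁ := by
          field_simp
        rw [heq, ← he1]
        exact h4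
      have h6 : -(|H r₁|) ≤ H r₁ / Real.exp (k*r) := by
        rcases le_or_gt 0 (H r₁) with h | h
        · have : 0 ≤ H r₁ / Real.exp (k*r) := div_nonneg h hekr.le
          linarith [abs_nonneg (H r₁)]
        · have h7 : 1 ≤ Real.exp (k*r) := by
            rw [Real.one_le_exp_iff]; positivity
          rw [abs_of_neg h, neg_neg, le_div_iff₀ hekr]
          nlinarith
      have h8 : c/(2*k) * Real.exp (k*r) + (-(|H r₁|)) ≤ g r := by linarith
      have h9 : (c/(2*k)) * (Real.exp (k*r) / r) + (-(|H r₁|)) / r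
          = (c/(2*k) * Real.exp (k*r) + (-(|H r₁|))) / r := by
        field_simp
      rw [h9, div_le_iff₀ hrpos]
      have h10 : g r = r * f r := rfl
      nlinarith [h8]
    have htend : Tendsto (fun r => (c/(2*k)) * (Real.exp (k*r) / r) + (-(|H r₁|)) / r)
        atTop atTop := by
      have h1 : Tendsto (fun r : ℝ => Real.exp (k*r) / r) atTop atTop := by
        have h2 : Tendsto (fun r : ℝ => k * r) atTop atTop :=
          Tendsto.const_mul_atTop hk tendsto_id
        have h3 : Tendsto (fun r : ℝ => Real.exp (k*r) / (k*r)) atTop atTop :=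
          ((Real.tendsto_exp_div_pow_atTop 1).comp h2).congr (by intro x; simp)
        have h4 := h3.const_mul_atTop hk
        refine h4.congr' ?_
        filter_upwards [eventually_gt_atTop 0] with r hr
        field_simp
      have h5 : Tendsto (fun r : ℝ => (-(|H r₁|)) / r) atTop (nhds 0) :=
        tendsto_const_nhds.div_atTop tendsto_id
      exact (h1.const_mul_atTop (by positivity : (0:ℝ) < c/(2*k))).atTop_add h5
    have hev : ∀ᶠ r in atTop, (1:ℝ) ≤ (c/(2*k)) * (Real.exp (k*r) / r) + (-(|H r₁|)) / r :=
      htend.eventually_ge_atTop 1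
    obtain ⟨R, hR⟩ := eventually_atTop.1 hev
    obtain ⟨r, hrR, hrf⟩ := hsmall (max R (max r₁ 1))
    have : (1:ℝ) ≤ f r :=
      le_trans (hR r ((le_max_left _ _).trans hrR)) (hfge r ((le_max_right _ _).trans hrR))
    linarith
  -- conclude
  set P : ℝ → ℝ := fun r => g r * Real.exp (k*r) with hPdef
  have hPd : ∀ r, HasDerivAt P (Q r * Real.exp (2*(k*r))) r := by
    intro r
    have h1 := (hg r).mul (hexp k r)
    refine h1.congr_deriv ?_
    simp only [hQdef]
    rw [Real.exp_neg, show (2*(k*r)) = k*r + k*r by ring, Real.exp_add]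
    field_simp
  have hPanti : AntitoneOn P (Set.Ici M₀) := by
    apply antitoneOn_of_deriv_nonpos (convex_Ici M₀)
    · exact fun r _ => ((hPd r).differentiableAt).continuousAt.continuousWithinAt
    · exact fun r _ => ((hPd r).differentiableAt).differentiableWithinAt
    · intro r hr
      rw [interior_Ici] at hr
      rw [(hPd r).deriv]
      have h1 := hQnonpos r hr.le
      have h2 := Real.exp_pos (2*(k*r))
      nlinarith
  intro r hr
  have h2 : g r * Real.exp (k*r) ≤ g M₀ * Real.exp (k*M₀) :=
    hPanti (Set.mem_Ici.2 le_rfl) (Set.mem_Ici.2 hr) hr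
  have h3 := mul_le_mul_of_nonneg_right h2 (Real.exp_pos (-(k*r))).le
  have he2 : Real.exp (k*r) * Real.exp (-(k*r)) = 1 := by rw [← Real.exp_add]; simp
  have h10 : g r = r * f r := rfl
  have h11 : g M₀ = M₀ * f M₀ := rfl
  calc r * f r = g r * Real.exp (k*r) * Real.exp (-(k*r)) := by
        rw [mul_assoc, he2, h10]; ring
    _ ≤ g M₀ * Real.exp (k*M₀) * Real.exp (-(k*r)) := h3
    _ = (M₀ * f M₀ * Real.exp (k * M₀)) * Real.exp (-(k*r)) := by rw [h11]

/-- Exponential decay of a nonnegative radial `H¹` solution of `−Δw + q w = 0`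
with `q ≥ |λ|/2 > 0` outside a ball. -/
theorem stmt5 (w q : E3 → ℝ) (lam M : ℝ) (hlam : lam ≠ 0)
    (hw_smooth : ContDiff ℝ 2 w) (hw_cont : Continuous w)
    (hw_rad : ∀ x y : E3, ‖x‖ = ‖y‖ → w x = w y)
    (hw_nonneg : ∀ x, 0 ≤ w x)
    (hwL2 : MemLp w 2 volume)
    (hwgrad : MemLp (fun x => ‖fderiv ℝ w x‖) 2 volume)
    (hq : ∀ x : E3, M < ‖x‖ → |lam| / 2 ≤ q x)
    (heq : ∀ x : E3, -lap w x + q x * w x = 0) :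
    ∃ α : ℝ, 0 < α ∧ ∃ γ : ℝ, 0 < γ ∧ γ < |lam| / 2 ∧
      ∀ x : E3, w x ≤ α * Real.exp (-Real.sqrt (1 + γ * ‖x‖ ^ 2)) := by
  have hlampos : 0 < |lam| := abs_pos.2 hlam
  set k : ℝ := Real.sqrt (|lam|/2) with hkdef
  have hk : 0 < k := Real.sqrt_pos.2 (by positivity)
  have hk2 : k^2 = |lam|/2 := Real.sq_sqrt (by positivity)
  set f : ℝ → ℝ := fun s => w (s • e3 0) with hfdef
  have hfC2 : ContDiff ℝ 2 f := hw_smooth.comp (contDiff_id.smul contDiff_const)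
  have hfd : Differentiable ℝ f := hfC2.differentiable (by norm_num)
  have hdfC1 : ContDiff ℝ 1 (deriv f) := by
    have := (contDiff_succ_iff_deriv (n := 1) (f := f)).1 (by norm_num at hfC2 ⊢; exact hfC2)
    exact this.2.2
  have hdfd : Differentiable ℝ (deriv f) := hdfC1.differentiable one_ne_zero
  have hwxf : ∀ x : E3, w x = f ‖x‖ := by
    intro x
    apply hw_rad
    rw [norm_smul, norm_e3, mul_one, Real.norm_eq_abs, abs_of_nonneg (norm_nonneg x)]
  have hfnn : ∀ r : ℝ, 0 ≤ f r := fun r => hw_nonneg _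
  set M₀ : ℝ := max M 0 + 1 with hM₀def
  have hM₀M : M < M₀ := lt_of_le_of_lt (le_max_left M 0) (lt_add_one _)
  have hM₀1 : (1:ℝ) ≤ M₀ := by
    have := le_max_right M 0
    simp only [hM₀def]; linarith
  have hM₀pos : (0:ℝ) < M₀ := lt_of_lt_of_le one_pos hM₀1
  -- the ODE hypothesis
  have hode : ∀ r, M₀ < r → k^2 * (r * f r) ≤ 2 * deriv f r + r * deriv (deriv f) r := by
    intro r hr
    have hr0 : (0:ℝ) < r := hM₀pos.trans hr
    have hnorm : ‖r • e3 0‖ = r := by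
      rw [norm_smul, norm_e3, mul_one, Real.norm_eq_abs, abs_of_nonneg hr0.le]
    have h0 := heq (r • e3 0)
    rw [lap_radial w hw_smooth hw_rad r hr0] at h0
    have h1 : deriv (deriv f) r + 2 * (deriv f r / r) = q (r • e3 0) * f r := by
      simp only [hfdef]
      linarith
    have hq' : k^2 ≤ q (r • e3 0) := by
      rw [hk2]
      exact hq _ (by rw [hnorm]; exact hM₀M.trans hr)
    have h2 : 2 * deriv f r + r * deriv (deriv f) r = r * (q (r • e3 0) * f r) := by
      have h1' := congrArg (fun z => r * z) h1
      have h3 : r * (2 * (deriv f r / r)) = 2 * deriv f r := by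
        field_simp
      nlinarith [h1']
    rw [h2]
    have h4 : 0 ≤ (q (r • e3 0) - k^2) * (r * f r) :=
      mul_nonneg (sub_nonneg.2 hq') (mul_nonneg hr0.le (hfnn r))
    nlinarith [h4]
  -- smallness at infinity from L²
  have hsmall : ∀ R : ℝ, ∃ r, R ≤ r ∧ f r < 1 := by
    by_contra hcon
    push_neg at hcon
    obtain ⟨R, hR⟩ := hcon
    exact notL2 w R (fun x hx => by rw [hwxf x]; exact hR ‖x‖ hx) hwL2
  have hdec := ode_decay f k M₀ hk hfd hdfd hode hsmall
  -- bound on the compact part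
  obtain ⟨z, hz, hzmax⟩ := (isCompact_Icc (a := (0:ℝ)) (b := M₀)).exists_isMaxOn
    ⟨0, Set.mem_Icc.2 ⟨le_rfl, hM₀pos.le⟩⟩ (hfC2.continuous.continuousOn)
  set C₁ : ℝ := f z with hC₁def
  set C₀ : ℝ := M₀ * f M₀ * Real.exp (k * M₀) with hC₀def
  set C₂ : ℝ := max (max C₀ (C₁ * Real.exp (k * M₀))) 1 with hC₂def
  have hC₂pos : (0:ℝ) < C₂ := lt_of_lt_of_le one_pos (le_max_right _ _)
  -- global exponential bound
  have hglob : ∀ r : ℝ, 0 ≤ r → f r ≤ C₂ * Real.exp (-(k*r)) := by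
    intro r hr0
    rcases le_or_gt r M₀ with h | h
    · have h1 : f r ≤ C₁ := hzmax (Set.mem_Icc.2 ⟨hr0, h⟩)
      have h2 : Real.exp (-(k*M₀)) ≤ Real.exp (-(k*r)) := by
        apply Real.exp_le_exp.2
        have : k * r ≤ k * M₀ := mul_le_mul_of_nonneg_left h hk.le
        linarith
      have h3 : C₁ * Real.exp (k * M₀) ≤ C₂ :=
        le_trans (le_max_right _ _) (le_max_left _ _)
      have hC₁nn : 0 ≤ C₁ := hfnn z
      calc f r ≤ C₁ := h1
        _ = C₁ * Real.exp (k*M₀) * Real.exp (-(k*M₀)) := by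
            rw [mul_assoc, ← Real.exp_add]; simp
        _ ≤ C₂ * Real.exp (-(k*M₀)) := by
            apply mul_le_mul_of_nonneg_right h3 (Real.exp_pos _).le
        _ ≤ C₂ * Real.exp (-(k*r)) := by
            apply mul_le_mul_of_nonneg_left h2 hC₂pos.le
    · have h1 := hdec r h.le
      have hr1 : (1:ℝ) ≤ r := hM₀1.trans h.le
      have hC₀C₂ : C₀ ≤ C₂ := le_trans (le_max_left _ _) (le_max_left _ _)
      have hexppos := Real.exp_pos (-(k*r))
      have h2 : f r ≤ C₀ * Real.exp (-(k*r)) := by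
        have h3 : r * f r ≤ C₀ * Real.exp (-(k*r)) := h1
        have h4 : f r ≤ r * f r := by nlinarith [hfnn r]
        linarith
      calc f r ≤ C₀ * Real.exp (-(k*r)) := h2
        _ ≤ C₂ * Real.exp (-(k*r)) := mul_le_mul_of_nonneg_right hC₀C₂ hexppos.le
  -- final assembly
  refine ⟨C₂ * Real.exp 1, by positivity, |lam|/4, by positivity, by linarith, ?_⟩
  intro x
  set r : ℝ := ‖x‖ with hrdef
  have hr0 : 0 ≤ r := norm_nonneg x
  have hsqrt : Real.sqrt (1 + |lam|/4 * r^2) ≤ 1 + k * r := by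
    have h1 : 1 + |lam|/4 * r^2 ≤ (1 + k*r)^2 := by
      have h2 : |lam|/4 * r^2 ≤ k^2 * r^2 := by
        apply mul_le_mul_of_nonneg_right _ (sq_nonneg r)
        rw [hk2]; linarith
      nlinarith [mul_nonneg hk.le hr0]
    calc Real.sqrt (1 + |lam|/4 * r^2) ≤ Real.sqrt ((1 + k*r)^2) := Real.sqrt_le_sqrt h1
      _ = 1 + k*r := Real.sqrt_sq (by positivity)
  have h5 : Real.exp (-(k*r)) ≤ Real.exp 1 * Real.exp (-Real.sqrt (1 + |lam|/4 * r^2)) := by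
    rw [← Real.exp_add]
    apply Real.exp_le_exp.2
    linarith
  calc w x = f r := hwxf x
    _ ≤ C₂ * Real.exp (-(k*r)) := hglob r hr0
    _ ≤ C₂ * (Real.exp 1 * Real.exp (-Real.sqrt (1 + |lam|/4 * r^2))) :=
        mul_le_mul_of_nonneg_left h5 hC₂pos.le
    _ = C₂ * Real.exp 1 * Real.exp (-Real.sqrt (1 + |lam|/4 * ‖x‖^2)) := by
        rw [hrdef]; ring
end
end

section
/- Let γ ∈ ℝ with 0 < γ. Then the function z(x) = e^{−√(1 + γ|x|^2)} satisfies −Δz + γ z ≥ 0 pointwise in ℝ^3. -/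
open MeasureTheory Real Filter

noncomputable section

lemma hasFDerivAt_u (γ : ℝ) (hγ : 0 < γ) (y : E3) :
    HasFDerivAt (fun y : E3 => Real.sqrt (1 + γ * ‖y‖ ^ 2))
      ((1/(2*Real.sqrt (1 + γ * ‖y‖ ^ 2))) • (γ • ((2:ℕ) • innerSL ℝ y))) y := by
  have h1 : (0:ℝ) < 1 + γ * ‖y‖ ^ 2 := by positivity
  have hs : HasFDerivAt (fun y : E3 => 1 + γ * ‖y‖ ^ 2) (γ • ((2:ℕ) • innerSL ℝ y)) y := by
    simpa using ((hasStrictFDerivAt_norm_sq y).hasFDerivAt.const_mul γ).const_add 1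
  exact (Real.hasDerivAt_sqrt h1.ne').comp_hasFDerivAt y hs

lemma fderiv_z (γ : ℝ) (hγ : 0 < γ) (y : E3) (i : Fin 3) :
    fderiv ℝ (fun y : E3 => Real.exp (-Real.sqrt (1 + γ * ‖y‖ ^ 2))) y (EuclideanSpace.single i 1)
      = -(γ * Real.exp (-Real.sqrt (1 + γ * ‖y‖ ^ 2)) / Real.sqrt (1 + γ * ‖y‖ ^ 2)) * y i := by
  have h1 : (0:ℝ) < 1 + γ * ‖y‖ ^ 2 := by positivity
  have hu0 : 0 < Real.sqrt (1 + γ * ‖y‖ ^ 2) := Real.sqrt_pos.2 h1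
  have hz := (Real.hasDerivAt_exp (-(Real.sqrt (1 + γ * ‖y‖ ^ 2)))).comp_hasFDerivAt y
    (hasFDerivAt_u γ hγ y).neg
  have hz' : HasFDerivAt (fun y : E3 => Real.exp (-Real.sqrt (1 + γ * ‖y‖ ^ 2)))
      (Real.exp (-(Real.sqrt (1 + γ * ‖y‖ ^ 2))) •
        -((1 / (2 * Real.sqrt (1 + γ * ‖y‖ ^ 2))) • γ • (2:ℕ) • innerSL ℝ y)) y := hz
  rw [hz'.fderiv]
  simp [EuclideanSpace.inner_single_right, real_inner_comm]
  field_simp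

/-- Derivative of `t ↦ -(γ e^{-t}/t)`. -/
lemma hasDerivAt_h (γ : ℝ) (t : ℝ) (ht : 0 < t) :
    HasDerivAt (fun t : ℝ => -(γ * Real.exp (-t) / t))
      (γ * Real.exp (-t) * (t + 1) / t ^ 2) t := by
  have he : HasDerivAt (fun t : ℝ => Real.exp (-t)) (-Real.exp (-t)) t := by
    simpa using (hasDerivAt_neg t).exp
  have hdiv := he.div (hasDerivAt_id t) ht.ne'
  have := (hdiv.const_mul γ).neg
  have hfg : (fun t : ℝ => -(γ * Real.exp (-t) / t)) = fun t => -(γ * (Real.exp (-t) / t)) := by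
    funext s; ring
  rw [hfg]
  convert this using 1
  all_goals try rfl
  simp only [id]
  field_simp
  ring

lemma fderiv2 (γ : ℝ) (hγ : 0 < γ) (x : E3) (i : Fin 3) :
    fderiv ℝ (fun y => fderiv ℝ (fun y : E3 => Real.exp (-Real.sqrt (1 + γ * ‖y‖ ^ 2))) y
        (EuclideanSpace.single i 1)) x (EuclideanSpace.single i 1)
      = -(γ * Real.exp (-Real.sqrt (1 + γ * ‖x‖ ^ 2)) / Real.sqrt (1 + γ * ‖x‖ ^ 2))
        + (x i) ^ 2 * (γ ^ 2 * Real.exp (-Real.sqrt (1 + γ * ‖x‖ ^ 2)) *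
            (Real.sqrt (1 + γ * ‖x‖ ^ 2) + 1) / Real.sqrt (1 + γ * ‖x‖ ^ 2) ^ 3) := by
  set u := Real.sqrt (1 + γ * ‖x‖ ^ 2) with hu
  have h1 : (0:ℝ) < 1 + γ * ‖x‖ ^ 2 := by positivity
  have hu0 : 0 < u := Real.sqrt_pos.2 h1
  have hfun : (fun y => fderiv ℝ (fun y : E3 => Real.exp (-Real.sqrt (1 + γ * ‖y‖ ^ 2))) y
      (EuclideanSpace.single i 1))
      = fun y : E3 => -(γ * Real.exp (-Real.sqrt (1 + γ * ‖y‖ ^ 2)) /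
          Real.sqrt (1 + γ * ‖y‖ ^ 2)) * y i := funext fun y => fderiv_z γ hγ y i
  rw [hfun]
  have hc : HasFDerivAt
      (fun y : E3 => -(γ * Real.exp (-Real.sqrt (1 + γ * ‖y‖ ^ 2)) / Real.sqrt (1 + γ * ‖y‖ ^ 2)))
      ((γ * Real.exp (-u) * (u + 1) / u ^ 2) • ((1/(2*u)) • (γ • ((2:ℕ) • innerSL ℝ x)))) x :=
    (hasDerivAt_h γ u hu0).comp_hasFDerivAt (h₂ := fun t : ℝ => -(γ * Real.exp (-t) / t)) x (hasFDerivAt_u γ hγ x)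
  have hcoord : HasFDerivAt (fun y : E3 => y i)
      (innerSL ℝ ((EuclideanSpace.single i 1 : E3))) x := by
    refine (innerSL ℝ ((EuclideanSpace.single i 1 : E3))).hasFDerivAt.congr_of_eventuallyEq ?_
    exact Filter.Eventually.of_forall fun y => by
      simp [EuclideanSpace.inner_single_left]
  have hG := hc.mul hcoord
  rw [show (fun y : E3 => -(γ * Real.exp (-Real.sqrt (1 + γ * ‖y‖ ^ 2)) / Real.sqrt (1 + γ * ‖y‖ ^ 2)) * y i)
      = (fun y : E3 => -(γ * Real.exp (-Real.sqrt (1 + γ * ‖y‖ ^ 2)) / Real.sqrt (1 + γ * ‖y‖ ^ 2)))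
        * (fun y : E3 => y i) from rfl, hG.fderiv]
  simp [EuclideanSpace.inner_single_left, EuclideanSpace.inner_single_right, real_inner_comm]
  field_simp
  ring

/-- For `γ > 0`, the function `z(x) = e^{−√(1 + γ|x|²)}` satisfies `−Δz + γz ≥ 0`
pointwise in `ℝ³`. -/
theorem stmt6 (γ : ℝ) (hγ : 0 < γ) (x : E3) :
    0 ≤ -lap (fun y : E3 => Real.exp (-Real.sqrt (1 + γ * ‖y‖ ^ 2))) x
        + γ * Real.exp (-Real.sqrt (1 + γ * ‖x‖ ^ 2)) := by
  have h1 : (0:ℝ) < 1 + γ * ‖x‖ ^ 2 := by positivity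
  set u := Real.sqrt (1 + γ * ‖x‖ ^ 2) with hu
  set E := Real.exp (-u) with hE
  have hu0 : 0 < u := Real.sqrt_pos.2 h1
  have hE0 : 0 < E := Real.exp_pos _
  have hu2 : u ^ 2 = 1 + γ * ‖x‖ ^ 2 := Real.sq_sqrt h1.le
  have hnorm : ‖x‖ ^ 2 = ∑ i : Fin 3, (x i) ^ 2 := by
    rw [EuclideanSpace.norm_eq, Real.sq_sqrt (by positivity)]
    simp [sq_abs]
  have hlap : lap (fun y : E3 => Real.exp (-Real.sqrt (1 + γ * ‖y‖ ^ 2))) x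
      = 3 * (-(γ * E / u)) + ‖x‖ ^ 2 * (γ ^ 2 * E * (u + 1) / u ^ 3) := by
    unfold lap
    rw [Finset.sum_congr rfl (fun i _ => fderiv2 γ hγ x i)]
    rw [Finset.sum_add_distrib, ← Finset.sum_mul, ← hnorm]
    simp
    rfl
  rw [hlap]
  have hr2 : ‖x‖ ^ 2 = (u ^ 2 - 1) / γ := by
    field_simp
    linarith [hu2]
  rw [hr2]
  have key : -(3 * (-(γ * E / u)) + (u ^ 2 - 1) / γ * (γ ^ 2 * E * (u + 1) / u ^ 3)) + γ * E
      = γ * E * (2 * u ^ 2 + u + 1) / u ^ 3 := by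
    field_simp
    ring
  rw [key]
  have h2 : (0:ℝ) < 2 * u ^ 2 + u + 1 := by nlinarith
  exact le_of_lt (div_pos (mul_pos (mul_pos hγ hE0) h2) (pow_pos hu0 3))
end
end

section
/- Let N ≥ 2, a > 0, and let f satisfy: f continuous and odd, F(s) = ∫_0^s f, and there exist 2 + 4/N < α ≤ β < 2* with 0 < α F(s) ≤ f(s)s ≤ β F(s) for s ≠ 0. Then for every u ∈ H^1(ℝ^N) with ∫ u^2 = a^2 and ∫ |∇u|^2 = (N/2)∫(f(u)u − 2F(u)), the energy satisfies I(u) := ∫ (½|∇u|^2 − F(u)) ≥ (1/(2β))(α − 2 − 4/N) ∫ |∇u|^2 > 0. In particular I restricted to this constraint set is coercive and bounded below by a positive constant. -/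
open MeasureTheory Real Filter

noncomputable section

/-- Coercivity and lower bound: on the constraint set `𝓜`, the energy satisfies
`I(u) ≥ (1/(2β))(α − 2 − 4/N) ∫|∇u|² > 0`. -/
theorem stmt12 (N : ℕ) (hN : 2 ≤ N) (a : ℝ) (ha : 0 < a) (f F : ℝ → ℝ)
    (hf_cont : Continuous f) (hf_odd : ∀ s, f (-s) = -f s)
    (hF0 : F 0 = 0) (hF' : ∀ s : ℝ, HasDerivAt F (f s) s)
    (α β : ℝ) (hαβ : α ≤ β) (hα : 2 + 4 / (N : ℝ) < α)
    (hβ : N = 2 ∨ β < 2 * (N : ℝ) / ((N : ℝ) - 2))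
    (hineq : ∀ s : ℝ, s ≠ 0 →
      0 < α * F s ∧ α * F s ≤ f s * s ∧ f s * s ≤ β * F s)
    (u : EuclideanSpace ℝ (Fin N) → ℝ)
    (hu_diff : Differentiable ℝ u)
    (huL2 : MemLp u 2 volume)
    (hgrad_int : Integrable (fun x => ‖fderiv ℝ u x‖ ^ 2) volume)
    (hF_int : Integrable (fun x => F (u x)) volume)
    (hfu_int : Integrable (fun x => f (u x) * u x) volume)
    (hmass : ∫ x, (u x) ^ 2 ∂volume = a ^ 2)
    (hcon : ∫ x, ‖fderiv ℝ u x‖ ^ 2 ∂volume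
      = (N : ℝ) / 2 * ∫ x, (f (u x) * u x - 2 * F (u x)) ∂volume) :
    (1 / (2 * β)) * (α - 2 - 4 / (N : ℝ)) * (∫ x, ‖fderiv ℝ u x‖ ^ 2 ∂volume)
      ≤ ∫ x, ((1 : ℝ) / 2 * ‖fderiv ℝ u x‖ ^ 2 - F (u x)) ∂volume ∧
    0 < ∫ x, ((1 : ℝ) / 2 * ‖fderiv ℝ u x‖ ^ 2 - F (u x)) ∂volume := by
  set n : ℝ := (N : ℝ) with hn_def
  have hn2 : (2:ℝ) ≤ n := by rw [hn_def]; exact_mod_cast hN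
  have hn0 : (0:ℝ) < n := by linarith
  have hα0 : (0:ℝ) < α := by
    have : (0:ℝ) < 4 / n := by positivity
    linarith
  have hβ0 : (0:ℝ) < β := lt_of_lt_of_le hα0 hαβ
  -- f 0 = 0
  have hf0 : f 0 = 0 := by have := hf_odd 0; simp at this; linarith
  -- pointwise inequalities
  have hFpos : ∀ s : ℝ, s ≠ 0 → 0 < F s := fun s hs => by
    have h := (hineq s hs).1
    nlinarith
  have hFnn : ∀ s : ℝ, 0 ≤ F s := fun s => by
    by_cases hs : s = 0
    · simp [hs, hF0]
    · exact (hFpos s hs).le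
  have hαF : ∀ x, α * F (u x) ≤ f (u x) * u x := fun x => by
    by_cases hs : u x = 0
    · simp [hs, hF0, hf0]
    · exact (hineq _ hs).2.1
  have hβF : ∀ x, f (u x) * u x ≤ β * F (u x) := fun x => by
    by_cases hs : u x = 0
    · simp [hs, hF0, hf0]
    · exact (hineq _ hs).2.2
  set G := ∫ x, ‖fderiv ℝ u x‖ ^ 2 ∂volume with hG_def
  set A := ∫ x, f (u x) * u x ∂volume with hA_def
  set B := ∫ x, F (u x) ∂volume with hB_def
  have hA1 : α * B ≤ A := by
    have := integral_mono (hF_int.const_mul α) hfu_int hαF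
    rwa [integral_const_mul] at this
  have hA2 : A ≤ β * B := by
    have := integral_mono hfu_int (hF_int.const_mul β) hβF
    rwa [integral_const_mul] at this
  have hGnn : 0 ≤ G := integral_nonneg fun x => by positivity
  -- B > 0
  have hBpos : 0 < B := by
    rw [hB_def]
    rw [integral_pos_iff_support_of_nonneg (fun x => hFnn (u x)) hF_int]
    by_contra h
    push_neg at h
    have hz : volume (Function.support fun x => F (u x)) = 0 := le_antisymm h zero_le
    have hsub : {x | u x ≠ 0} ⊆ Function.support fun x => F (u x) := by
      intro x hx
      exact ne_of_gt (hFpos _ hx)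
    have hu0 : u =ᵐ[volume] 0 := by
      rw [Filter.EventuallyEq, ae_iff]
      exact measure_mono_null hsub hz
    have hsq : (fun x => (u x) ^ 2) =ᵐ[volume] (fun _ => (0:ℝ)) :=
      hu0.mono fun x hx => by simp [Pi.zero_apply] at hx; simp [hx]
    have : ∫ x, (u x) ^ 2 ∂volume = 0 := by
      rw [integral_congr_ae hsq]; simp
    rw [hmass] at this
    nlinarith
  -- constraint rewritten
  have hcon' : G = n / 2 * (A - 2 * B) := by
    rw [hcon]
    congr 1
    rw [integral_sub hfu_int (hF_int.const_mul 2), integral_const_mul]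
  -- energy rewritten
  have hI : ∫ x, ((1 : ℝ) / 2 * ‖fderiv ℝ u x‖ ^ 2 - F (u x)) ∂volume = G / 2 - B := by
    rw [integral_sub (hgrad_int.const_mul (1/2)) hF_int, integral_const_mul]
    ring
  rw [hI]
  clear_value G A B
  clear hI hG_def hA_def hB_def hcon hmass hαF hβF hgrad_int hF_int hfu_int huL2 hu_diff hineq hFpos hFnn hf0 hf_odd hf_cont hF' hF0 u f F
  have h4n : 4 / n * n = 4 := by field_simp
  have hcnn : 0 ≤ α - 2 - 4 / n := by linarith
  -- key: 2 G ≤ n β B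
  have k1 : 2 * G ≤ n * β * B := by nlinarith
  -- key: (n α - 2 n - 4) * B ≤ 4 * (G/2 - B)
  have k2 : (n * α - 2 * n - 4) * B ≤ 4 * (G / 2 - B) := by nlinarith
  have hc4 : (α - 2 - 4 / n) * n = n * α - 2 * n - 4 := by field_simp
  constructor
  · rw [div_mul_eq_mul_div, div_mul_eq_mul_div, div_le_iff₀ (by positivity : (0:ℝ) < 2 * β)]
    nlinarith [mul_nonneg hcnn (sub_nonneg.mpr k1), mul_le_mul_of_nonneg_left k2 hβ0.le]
  · have hpos : 0 < n * α - 2 * n - 4 := by nlinarith [mul_lt_mul_of_pos_left hα hn0]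
    nlinarith [mul_pos hpos hBpos]
end
end

section
/- Let N ≥ 2 and f : ℝ → ℝ continuous and odd with F(s) = ∫_0^s f, satisfying: there exist 2 + 4/N < α ≤ β < 2* with 0 < αF(s) ≤ f(s)s ≤ βF(s) for s ≠ 0. For u ∈ H^1(ℝ^N) with u ≠ 0, define Ψ_u(s) = (e^{2s}/2)∫|∇u|² − e^{−Ns} ∫ F(e^{Ns/2} u). Then Ψ_u(s) → 0⁺ as s → −∞ and Ψ_u(s) → −∞ as s → +∞; in particular Ψ_u attains a positive maximum on ℝ. -/
open MeasureTheory Real Filter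

noncomputable section

private lemma hasDerivAt_phi (F f : ℝ → ℝ) (hF' : ∀ s : ℝ, HasDerivAt F (f s) s)
    (γ c t : ℝ) (ht : 0 < t) :
    HasDerivAt (fun t : ℝ => F (t * c) * t ^ (-γ))
      ((f (t * c) * (t * c) - γ * F (t * c)) * t ^ (-γ - 1)) t := by
  have hFc : HasDerivAt (fun t : ℝ => F (t * c)) (f (t * c) * c) t := by
    exact (hF' (t * c)).comp t (hasDerivAt_mul_const c)
  have hr : HasDerivAt (fun t : ℝ => t ^ (-γ)) (-γ * t ^ (-γ - 1)) t :=
    Real.hasDerivAt_rpow_const (Or.inl (ne_of_gt ht))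
  have h := hFc.mul hr
  refine h.congr_deriv ?_
  have h1 : t ^ (-γ - 1) * t = t ^ (-γ) := by
    calc t ^ (-γ - 1) * t = t ^ (-γ - 1) * t ^ (1 : ℝ) := by rw [Real.rpow_one]
      _ = t ^ (-γ - 1 + 1) := (Real.rpow_add ht _ _).symm
      _ = t ^ (-γ) := by ring_nf
  rw [← h1]; ring

private lemma phiMono (F f : ℝ → ℝ) (hF' : ∀ s : ℝ, HasDerivAt F (f s) s)
    (γ : ℝ) (c : ℝ) (h : ∀ r : ℝ, 0 ≤ f r * r - γ * F r) :
    MonotoneOn (fun t : ℝ => F (t * c) * t ^ (-γ)) (Set.Ioi (0:ℝ)) := by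
  apply monotoneOn_of_deriv_nonneg (convex_Ioi 0)
  · intro t ht
    exact (hasDerivAt_phi F f hF' γ c t ht).continuousAt.continuousWithinAt
  · intro t ht
    rw [interior_Ioi] at ht
    exact (hasDerivAt_phi F f hF' γ c t ht).differentiableAt.differentiableWithinAt
  · intro t ht
    rw [interior_Ioi] at ht
    rw [(hasDerivAt_phi F f hF' γ c t ht).deriv]
    exact mul_nonneg (h _) (Real.rpow_nonneg ht.le _)

private lemma phiAnti (F f : ℝ → ℝ) (hF' : ∀ s : ℝ, HasDerivAt F (f s) s)
    (γ : ℝ) (c : ℝ) (h : ∀ r : ℝ, f r * r - γ * F r ≤ 0) :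
    AntitoneOn (fun t : ℝ => F (t * c) * t ^ (-γ)) (Set.Ioi (0:ℝ)) := by
  apply antitoneOn_of_deriv_nonpos (convex_Ioi 0)
  · intro t ht
    exact (hasDerivAt_phi F f hF' γ c t ht).continuousAt.continuousWithinAt
  · intro t ht
    rw [interior_Ioi] at ht
    exact (hasDerivAt_phi F f hF' γ c t ht).differentiableAt.differentiableWithinAt
  · intro t ht
    rw [interior_Ioi] at ht
    rw [(hasDerivAt_phi F f hF' γ c t ht).deriv]
    exact mul_nonpos_of_nonpos_of_nonneg (h _) (Real.rpow_nonneg ht.le _)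

-- corollaries
private lemma key_le_one (F f : ℝ → ℝ) (hF' : ∀ s : ℝ, HasDerivAt F (f s) s)
    (γ : ℝ) (h : ∀ r : ℝ, 0 ≤ f r * r - γ * F r) (c : ℝ) {t : ℝ}
    (ht0 : 0 < t) (ht1 : t ≤ 1) : F (t * c) ≤ F c * t ^ γ := by
  have hm := phiMono F f hF' γ c h (Set.mem_Ioi.2 ht0) (Set.mem_Ioi.2 one_pos) ht1
  simp only [one_mul, Real.one_rpow, mul_one] at hm
  rw [Real.rpow_neg ht0.le, ← div_eq_mul_inv, div_le_iff₀ (Real.rpow_pos_of_pos ht0 γ)] at hm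
  exact hm

private lemma key_ge_one (F f : ℝ → ℝ) (hF' : ∀ s : ℝ, HasDerivAt F (f s) s)
    (γ : ℝ) (h : ∀ r : ℝ, 0 ≤ f r * r - γ * F r) (c : ℝ) {t : ℝ}
    (ht1 : 1 ≤ t) : F c * t ^ γ ≤ F (t * c) := by
  have ht0 : (0:ℝ) < t := lt_of_lt_of_le one_pos ht1
  have hm := phiMono F f hF' γ c h (Set.mem_Ioi.2 one_pos) (Set.mem_Ioi.2 ht0) ht1
  simp only [one_mul, Real.one_rpow, mul_one] at hm
  rw [Real.rpow_neg ht0.le, ← div_eq_mul_inv, le_div_iff₀ (Real.rpow_pos_of_pos ht0 γ)] at hm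
  exact hm

private lemma key_up_one (F f : ℝ → ℝ) (hF' : ∀ s : ℝ, HasDerivAt F (f s) s)
    (γ : ℝ) (h : ∀ r : ℝ, f r * r - γ * F r ≤ 0) (c : ℝ) {t : ℝ}
    (ht1 : 1 ≤ t) : F (t * c) ≤ F c * t ^ γ := by
  have ht0 : (0:ℝ) < t := lt_of_lt_of_le one_pos ht1
  have hm := phiAnti F f hF' γ c h (Set.mem_Ioi.2 one_pos) (Set.mem_Ioi.2 ht0) ht1
  simp only [one_mul, Real.one_rpow, mul_one] at hm
  rw [Real.rpow_neg ht0.le, ← div_eq_mul_inv, div_le_iff₀ (Real.rpow_pos_of_pos ht0 γ)] at hm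
  exact hm

private lemma grad_pos (N : ℕ) (hN : 2 ≤ N) (u : EuclideanSpace ℝ (Fin N) → ℝ)
    (hu_diff : Differentiable ℝ u)
    (hu2int : Integrable (fun x => (u x) ^ 2) volume)
    (hgrad_int : Integrable (fun x => ‖fderiv ℝ u x‖ ^ 2) volume)
    (hu_ne : 0 < ∫ x, (u x) ^ 2 ∂volume) :
    0 < ∫ x, ‖fderiv ℝ u x‖ ^ 2 ∂volume := by
  rcases lt_or_ge 0 (∫ x, ‖fderiv ℝ u x‖ ^ 2 ∂volume) with h | hD
  · exact h
  exfalso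
  have hnn : 0 ≤ fun x : EuclideanSpace ℝ (Fin N) => ‖fderiv ℝ u x‖ ^ 2 :=
    fun x => by positivity
  have hD0 : ∫ x, ‖fderiv ℝ u x‖ ^ 2 ∂volume = 0 :=
    le_antisymm hD (integral_nonneg hnn)
  have h1 : (fun x => ‖fderiv ℝ u x‖ ^ 2) =ᵐ[volume] 0 :=
    (integral_eq_zero_iff_of_nonneg hnn hgrad_int).1 hD0
  have h2 : ∀ᵐ x ∂(volume : Measure (EuclideanSpace ℝ (Fin N))), fderiv ℝ u x = 0 := by
    filter_upwards [h1] with x hx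
    have : ‖fderiv ℝ u x‖ = 0 := by
      have : ‖fderiv ℝ u x‖ ^ 2 = 0 := hx
      nlinarith [norm_nonneg (fderiv ℝ u x)]
    simpa using this
  have hA : volume {z : EuclideanSpace ℝ (Fin N) | fderiv ℝ u z ≠ 0} = 0 := by
    rw [← MeasureTheory.ae_iff]
    exact h2
  -- translations: for every y, u (x + y) = u x for a.e. x
  have htrans : ∀ y : EuclideanSpace ℝ (Fin N),
      ∀ᵐ x ∂(volume : Measure (EuclideanSpace ℝ (Fin N))), u (x + y) = u x := by
    intro y
    have hAmeas : MeasurableSet {z : EuclideanSpace ℝ (Fin N) | fderiv ℝ u z ≠ 0} :=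
      (measurable_fderiv ℝ u) (measurableSet_singleton 0).compl
    -- bad set in ℝ × E
    set C2 : Set (ℝ × EuclideanSpace ℝ (Fin N)) :=
      {p | fderiv ℝ u (p.2 + p.1 • y) ≠ 0} with hC2def
    have hmap : Measurable fun p : ℝ × EuclideanSpace ℝ (Fin N) => p.2 + p.1 • y :=
      (continuous_snd.add (continuous_fst.smul continuous_const)).measurable
    have hC2meas : MeasurableSet C2 :=
      ((measurable_fderiv ℝ u).comp hmap) (measurableSet_singleton 0).compl
    have hC2 : (volume.prod volume) C2 = 0 := by
      rw [Measure.prod_apply hC2meas]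
      have hslice : ∀ t : ℝ,
          volume (Prod.mk t ⁻¹' C2) = 0 := by
        intro t
        have hpre : (Prod.mk t ⁻¹' C2)
            = (fun x => x + t • y) ⁻¹' {z | fderiv ℝ u z ≠ 0} := rfl
        rw [hpre, measure_preimage_add_right]
        exact hA
      simp [hslice]
    -- swap to E × ℝ
    have hC3 : (volume.prod volume)
        {p : EuclideanSpace ℝ (Fin N) × ℝ | fderiv ℝ u (p.1 + p.2 • y) ≠ 0} = 0 := by
      have hpre : {p : EuclideanSpace ℝ (Fin N) × ℝ | fderiv ℝ u (p.1 + p.2 • y) ≠ 0}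
          = Prod.swap ⁻¹' C2 := rfl
      rw [hpre, ← Measure.map_apply measurable_swap hC2meas, Measure.prod_swap]
      exact hC2
    have hae : ∀ᵐ p ∂((volume : Measure (EuclideanSpace ℝ (Fin N))).prod (volume : Measure ℝ)),
        fderiv ℝ u (p.1 + p.2 • y) = 0 := by
      rw [ae_iff]
      exact hC3
    have hxae := Measure.ae_ae_of_ae_prod hae
    filter_upwards [hxae] with x hx
    have hg : ∀ t : ℝ, HasDerivAt (fun t : ℝ => u (x + t • y))
        ((fderiv ℝ u (x + t • y)) y) t := by
      intro t
      have hline : HasDerivAt (fun t : ℝ => x + t • y) y t := by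
        simpa using ((hasDerivAt_id t).smul_const y).const_add x
      exact
        ((hu_diff (x + t • y)).hasFDerivAt.comp_hasDerivAt t hline)
    have hd0 : ∀ᵐ t : ℝ, (fderiv ℝ u (x + t • y)) y = 0 :=
      hx.mono fun t ht => by rw [ht]; rfl
    have hint : IntervalIntegrable (fun t => (fderiv ℝ u (x + t • y)) y) volume 0 1 :=
      ((integrable_zero _ _ _).congr (hd0.mono fun t ht => ht.symm)).intervalIntegrable
    have hFTC := intervalIntegral.integral_eq_sub_of_hasDerivAt
      (f := fun t : ℝ => u (x + t • y)) (fun t _ => hg t) hint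
    have hzero : (∫ t in (0:ℝ)..1, (fderiv ℝ u (x + t • y)) y) = 0 := by
      rw [intervalIntegral.integral_congr_ae (hd0.mono fun t ht _ => ht)]
      simp
    rw [hzero] at hFTC
    have h10 : u (x + (1:ℝ) • y) - u (x + (0:ℝ) • y) = 0 := hFTC.symm
    simpa [sub_eq_zero] using h10
  -- u is a.e. constant
  have hQ : ∀ y : EuclideanSpace ℝ (Fin N), volume {x | u (x + y) ≠ u x} = 0 := by
    intro y
    rw [← MeasureTheory.ae_iff]
    exact htrans y
  have hucont : Continuous u := hu_diff.continuous
  set Q2 : Set (EuclideanSpace ℝ (Fin N) × EuclideanSpace ℝ (Fin N)) :=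
    {p | u (p.2 + p.1) ≠ u p.2} with hQ2def
  have hQ2meas : MeasurableSet Q2 := by
    have : Continuous fun p : EuclideanSpace ℝ (Fin N) × EuclideanSpace ℝ (Fin N) =>
        u (p.2 + p.1) - u p.2 :=
      (hucont.comp (continuous_snd.add continuous_fst)).sub (hucont.comp continuous_snd)
    have heq : Q2 = (fun p : EuclideanSpace ℝ (Fin N) × EuclideanSpace ℝ (Fin N) =>
        u (p.2 + p.1) - u p.2) ⁻¹' {(0:ℝ)}ᶜ := by
      ext p; simp [hQ2def, sub_eq_zero]
    rw [heq]
    exact this.measurable (measurableSet_singleton 0).compl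
  have hQ2vol : (volume.prod volume) Q2 = 0 := by
    rw [Measure.prod_apply hQ2meas]
    have hslice : ∀ y : EuclideanSpace ℝ (Fin N), volume (Prod.mk y ⁻¹' Q2) = 0 := by
      intro y
      have : (Prod.mk y ⁻¹' Q2) = {x | u (x + y) ≠ u x} := rfl
      rw [this]
      exact hQ y
    simp [hslice]
  have hQ3 : (volume.prod volume)
      {p : EuclideanSpace ℝ (Fin N) × EuclideanSpace ℝ (Fin N) | u (p.1 + p.2) ≠ u p.1} = 0 := by
    have hpre : {p : EuclideanSpace ℝ (Fin N) × EuclideanSpace ℝ (Fin N) | u (p.1 + p.2) ≠ u p.1}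
        = Prod.swap ⁻¹' Q2 := rfl
    rw [hpre, ← Measure.map_apply measurable_swap hQ2meas, Measure.prod_swap]
    exact hQ2vol
  have hae2 : ∀ᵐ p ∂((volume : Measure (EuclideanSpace ℝ (Fin N))).prod volume),
      u (p.1 + p.2) = u p.1 := by
    rw [ae_iff]; exact hQ3
  have hxy := Measure.ae_ae_of_ae_prod hae2
  haveI : NeBot (ae (volume : Measure (EuclideanSpace ℝ (Fin N)))) := by
    rw [ae_neBot]
    intro h
    rw [h] at hu_ne
    simp at hu_ne
  obtain ⟨x₀, hx₀⟩ := hxy.exists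
  have hconst : ∀ᵐ z ∂(volume : Measure (EuclideanSpace ℝ (Fin N))), u z = u x₀ := by
    have h5 : volume {y : EuclideanSpace ℝ (Fin N) | u (x₀ + y) ≠ u x₀} = 0 := by
      rw [← MeasureTheory.ae_iff]; exact hx₀
    have hpre : (fun h : EuclideanSpace ℝ (Fin N) => x₀ + h) ⁻¹' {z | u z ≠ u x₀}
        = {y | u (x₀ + y) ≠ u x₀} := rfl
    have := measure_preimage_add volume x₀ {z | u z ≠ u x₀}
    rw [hpre] at this
    rw [ae_iff]
    show volume {z | u z ≠ u x₀} = 0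
    rw [← this]
    exact h5
  -- contradiction
  have hc2 : Integrable (fun _ : EuclideanSpace ℝ (Fin N) => (u x₀) ^ 2) volume :=
    hu2int.congr (hconst.mono fun z hz => by simp [hz])
  rw [integrable_const_iff] at hc2
  haveI : Nonempty (Fin N) := ⟨⟨0, by omega⟩⟩
  haveI : Nontrivial (EuclideanSpace ℝ (Fin N)) := by
    refine ⟨0, EuclideanSpace.single ⟨0, by omega⟩ 1, ?_⟩
    intro h
    have := congrArg (fun v : EuclideanSpace ℝ (Fin N) => v ⟨0, by omega⟩) h
    simp [EuclideanSpace.single_apply] at this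
  haveI : NoncompactSpace (EuclideanSpace ℝ (Fin N)) := NormedSpace.noncompactSpace ℝ _
  rcases hc2 with hc0 | hfin
  · have hu0 : u x₀ = 0 := by
      have := sq_eq_zero_iff.1 hc0
      exact this
    have : ∫ x, (u x) ^ 2 ∂(volume : Measure (EuclideanSpace ℝ (Fin N))) = 0 := by
      have heq : (fun x : EuclideanSpace ℝ (Fin N) => (u x) ^ 2)
          =ᵐ[volume] (fun _ => (0:ℝ)) := hconst.mono fun z hz => by simp [hz, hu0]
      rw [integral_congr_ae heq]
      simp
    rw [this] at hu_ne
    exact lt_irrefl 0 hu_ne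
  · have hfin := hfin.measure_univ_lt_top
    rw [measure_univ_of_isAddLeftInvariant (volume : Measure (EuclideanSpace ℝ (Fin N)))] at hfin
    exact lt_irrefl _ hfin

set_option maxHeartbeats 1000000 in
/-- Asymptotic behaviour of the fiber map
`Ψ_u(s) = (e^{2s}/2)∫|∇u|² − e^{−Ns}∫F(e^{Ns/2}u)`:
it tends to `0⁺` as `s → −∞`, to `−∞` as `s → +∞`, and attains a positive maximum. -/

theorem stmt19 (N : ℕ) (hN : 2 ≤ N) (f F : ℝ → ℝ)
    (hf_cont : Continuous f) (hf_odd : ∀ s, f (-s) = -f s)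
    (hF0 : F 0 = 0) (hF' : ∀ s : ℝ, HasDerivAt F (f s) s)
    (α β : ℝ) (hαβ : α ≤ β) (hα : 2 + 4 / (N : ℝ) < α)
    (hβ : N = 2 ∨ β < 2 * (N : ℝ) / ((N : ℝ) - 2))
    (hineq : ∀ s : ℝ, s ≠ 0 →
      0 < α * F s ∧ α * F s ≤ f s * s ∧ f s * s ≤ β * F s)
    (u : EuclideanSpace ℝ (Fin N) → ℝ)
    (hu_diff : Differentiable ℝ u)
    (hu2int : Integrable (fun x => (u x) ^ 2) volume)
    (hgrad_int : Integrable (fun x => ‖fderiv ℝ u x‖ ^ 2) volume)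
    (hF_int : ∀ s : ℝ, Integrable (fun x => F (Real.exp ((N : ℝ) * s / 2) * u x)) volume)
    (hu_ne : 0 < ∫ x, (u x) ^ 2 ∂volume)
    (Ψ : ℝ → ℝ)
    (hΨ : Ψ = fun s => Real.exp (2 * s) / 2 * (∫ x, ‖fderiv ℝ u x‖ ^ 2 ∂volume)
      - Real.exp (-(N : ℝ) * s) * ∫ x, F (Real.exp ((N : ℝ) * s / 2) * u x) ∂volume) :
    Tendsto Ψ atBot (nhds 0) ∧ (∀ᶠ s in atBot, 0 < Ψ s) ∧
    Tendsto Ψ atTop atBot ∧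
    ∃ s0 : ℝ, 0 < Ψ s0 ∧ ∀ s : ℝ, Ψ s ≤ Ψ s0 := by
  have hN' : (2:ℝ) ≤ (N:ℝ) := by exact_mod_cast hN
  have hNpos : (0:ℝ) < (N:ℝ) := by linarith
  have hα0 : (0:ℝ) < α := by
    have : 0 < 4 / (N:ℝ) := by positivity
    linarith
  have hβ0 : (0:ℝ) < β := lt_of_lt_of_le hα0 hαβ
  have hFnn : ∀ r : ℝ, 0 ≤ F r := by
    intro r
    rcases eq_or_ne r 0 with h | h
    · simp [h, hF0]
    · nlinarith [(hineq r h).1]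
  have hFposr : ∀ r : ℝ, r ≠ 0 → 0 < F r := fun r h => by nlinarith [(hineq r h).1]
  have hlow : ∀ r : ℝ, 0 ≤ f r * r - α * F r := by
    intro r; rcases eq_or_ne r 0 with h | h
    · simp [h, hF0]
    · linarith [(hineq r h).2.1]
  have hup : ∀ r : ℝ, f r * r - β * F r ≤ 0 := by
    intro r; rcases eq_or_ne r 0 with h | h
    · simp [h, hF0]
    · linarith [(hineq r h).2.2]
  have hFcont : Continuous F := continuous_iff_continuousAt.2 fun s => (hF' s).continuousAt
  set D := ∫ x, ‖fderiv ℝ u x‖ ^ 2 ∂(volume : Measure (EuclideanSpace ℝ (Fin N))) with hDdef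
  have hDpos : 0 < D := grad_pos N hN u hu_diff hu2int hgrad_int hu_ne
  have hCint : Integrable (fun x => F (u x)) (volume : Measure (EuclideanSpace ℝ (Fin N))) := by
    have := hF_int 0
    simpa using this
  set C := ∫ x, F (u x) ∂(volume : Measure (EuclideanSpace ℝ (Fin N))) with hCdef
  have hCpos : 0 < C := by
    rw [hCdef, integral_pos_iff_support_of_nonneg_ae (Eventually.of_forall fun x => hFnn _) hCint]
    rw [integral_pos_iff_support_of_nonneg_ae
      (Eventually.of_forall fun x => sq_nonneg (u x)) hu2int] at hu_ne
    refine lt_of_lt_of_le hu_ne (measure_mono ?_)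
    intro x hx
    simp only [Function.mem_support] at hx ⊢
    rcases eq_or_ne (u x) 0 with h | h
    · exact absurd (by simp [h]) hx
    · exact ne_of_gt (hFposr _ h)
  set κ := (N:ℝ) * α / 2 with hκdef
  have hκ : 2 < κ - (N:ℝ) := by
    have h1 : (2 + 4 / (N:ℝ)) * (N:ℝ) < α * (N:ℝ) := mul_lt_mul_of_pos_right hα hNpos
    have h2 : (2 + 4 / (N:ℝ)) * (N:ℝ) = 2 * (N:ℝ) + 4 := by field_simp
    rw [hκdef]
    nlinarith
  have hTpos : ∀ s : ℝ, 0 < Real.exp ((N:ℝ) * s / 2) := fun s => Real.exp_pos _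
  -- upper bound on the nonlinear integral for s ≤ 0
  have hGup : ∀ s : ℝ, s ≤ 0 →
      (∫ x, F (Real.exp ((N:ℝ) * s / 2) * u x) ∂volume) ≤ Real.exp (κ * s) * C := by
    intro s hs
    have ht1 : Real.exp ((N:ℝ) * s / 2) ≤ 1 := Real.exp_le_one_iff.2 (by nlinarith)
    have hpt : ∀ x : EuclideanSpace ℝ (Fin N),
        F (Real.exp ((N:ℝ) * s / 2) * u x) ≤ F (u x) * Real.exp (κ * s) := by
      intro x
      have h1 := key_le_one F f hF' α hlow (u x) (hTpos s) ht1
      have h2 : Real.exp ((N:ℝ) * s / 2) ^ α = Real.exp (κ * s) := by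
        rw [← Real.exp_mul]
        congr 1
        rw [hκdef]; ring
      rw [h2] at h1
      exact h1
    have h3 := integral_mono (hF_int s) (hCint.mul_const _) hpt
    calc (∫ x, F (Real.exp ((N:ℝ) * s / 2) * u x) ∂volume)
        ≤ ∫ x, F (u x) * Real.exp (κ * s) ∂volume := h3
      _ = C * Real.exp (κ * s) := by rw [integral_mul_const, hCdef]
      _ = Real.exp (κ * s) * C := by ring
  have hGnn : ∀ s : ℝ, 0 ≤ ∫ x, F (Real.exp ((N:ℝ) * s / 2) * u x) ∂volume :=
    fun s => integral_nonneg fun x => hFnn _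
  -- lower bound on the nonlinear integral for s ≥ 0
  have hGlow : ∀ s : ℝ, 0 ≤ s →
      Real.exp (κ * s) * C ≤ ∫ x, F (Real.exp ((N:ℝ) * s / 2) * u x) ∂volume := by
    intro s hs
    have ht1 : 1 ≤ Real.exp ((N:ℝ) * s / 2) := Real.one_le_exp (by positivity)
    have hpt : ∀ x : EuclideanSpace ℝ (Fin N),
        F (u x) * Real.exp (κ * s) ≤ F (Real.exp ((N:ℝ) * s / 2) * u x) := by
      intro x
      have h1 := key_ge_one F f hF' α hlow (u x) ht1
      have h2 : Real.exp ((N:ℝ) * s / 2) ^ α = Real.exp (κ * s) := by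
        rw [← Real.exp_mul]
        congr 1
        rw [hκdef]; ring
      rw [h2] at h1
      exact h1
    have h3 := integral_mono (hCint.mul_const _) (hF_int s) hpt
    calc Real.exp (κ * s) * C = C * Real.exp (κ * s) := by ring
      _ = ∫ x, F (u x) * Real.exp (κ * s) ∂volume := by rw [integral_mul_const, hCdef]
      _ ≤ _ := h3
  -- continuity of the nonlinear integral
  have hucont : Continuous u := hu_diff.continuous
  have hGcont : Continuous (fun s : ℝ =>
      ∫ x, F (Real.exp ((N:ℝ) * s / 2) * u x) ∂(volume : Measure (EuclideanSpace ℝ (Fin N)))) := by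
    rw [continuous_iff_continuousAt]
    intro s₀
    apply MeasureTheory.continuousAt_of_dominated
      (bound := fun x => (1 + Real.exp ((N:ℝ) * (s₀ + 1) / 2) ^ β) * F (u x))
    · exact Eventually.of_forall fun s =>
        ((hFcont.comp (continuous_const.mul hucont)).aestronglyMeasurable)
    · have hnb : ∀ᶠ s in nhds s₀, s < s₀ + 1 := eventually_lt_nhds (lt_add_one s₀)
      filter_upwards [hnb] with s hs
      refine Eventually.of_forall fun x => ?_
      rw [Real.norm_of_nonneg (hFnn _)]
      rcases le_or_gt (Real.exp ((N:ℝ) * s / 2)) 1 with h1 | h1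
      · have hk := key_le_one F f hF' α hlow (u x) (hTpos s) h1
        have h2 : Real.exp ((N:ℝ) * s / 2) ^ α ≤ 1 :=
          Real.rpow_le_one (le_of_lt (hTpos s)) h1 hα0.le
        nlinarith [hFnn (u x), Real.rpow_nonneg (le_of_lt (hTpos s)) α,
          Real.rpow_nonneg (Real.exp_nonneg ((N:ℝ) * (s₀ + 1) / 2)) β]
      · have hk := key_up_one F f hF' β hup (u x) h1.le
        have h2 : Real.exp ((N:ℝ) * s / 2) ^ β ≤ Real.exp ((N:ℝ) * (s₀ + 1) / 2) ^ β :=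
          Real.rpow_le_rpow (Real.exp_nonneg _) (Real.exp_le_exp.2 (by nlinarith)) hβ0.le
        nlinarith [hFnn (u x)]
    · exact hCint.const_mul _
    · refine Eventually.of_forall fun x => ?_
      exact (hFcont.comp ((Real.continuous_exp.comp
        ((continuous_const.mul continuous_id).div_const 2)).mul continuous_const)).continuousAt
  have hΨval : ∀ s : ℝ, Ψ s = Real.exp (2 * s) / 2 * D
      - Real.exp (-(N:ℝ) * s) * ∫ x, F (Real.exp ((N:ℝ) * s / 2) * u x) ∂volume := by
    intro s; rw [hΨ]
  have hΨcont : Continuous Ψ := by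
    rw [hΨ]
    apply Continuous.sub
    · exact ((Real.continuous_exp.comp (continuous_const.mul continuous_id)).div_const 2).mul
        continuous_const
    · exact (Real.continuous_exp.comp (continuous_const.mul continuous_id)).mul hGcont
  have texp : ∀ c : ℝ, 0 < c → Tendsto (fun s => Real.exp (c * s)) atBot (nhds 0) :=
    fun c hc => Real.tendsto_exp_atBot.comp (Tendsto.const_mul_atBot hc tendsto_id)
  have texpTop : ∀ c : ℝ, 0 < c → Tendsto (fun s => Real.exp (c * s)) atTop atTop :=
    fun c hc => Real.tendsto_exp_atTop.comp (Tendsto.const_mul_atTop hc tendsto_id)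
  -- Part 1 : tendsto 0 at -infty
  have hBbound : ∀ s : ℝ, s ≤ 0 → Real.exp (-(N:ℝ) * s) *
      (∫ x, F (Real.exp ((N:ℝ) * s / 2) * u x) ∂volume) ≤ Real.exp ((κ - N) * s) * C := by
    intro s hs
    have h4 := mul_le_mul_of_nonneg_left (hGup s hs) (Real.exp_nonneg (-(N:ℝ) * s))
    calc Real.exp (-(N:ℝ) * s) * (∫ x, F (Real.exp ((N:ℝ) * s / 2) * u x) ∂volume)
        ≤ Real.exp (-(N:ℝ) * s) * (Real.exp (κ * s) * C) := h4
      _ = Real.exp ((κ - N) * s) * C := by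
          rw [← mul_assoc, ← Real.exp_add]
          congr 2
          ring
  have h1 : Tendsto Ψ atBot (nhds 0) := by
    rw [hΨ]
    have hA : Tendsto (fun s => Real.exp (2 * s) / 2 * D) atBot (nhds 0) := by
      have := ((texp 2 two_pos).div_const 2).mul_const D
      simpa using this
    have hBub : Tendsto (fun s => Real.exp ((κ - N) * s) * C) atBot (nhds 0) := by
      simpa using (texp (κ - N) (by linarith)).mul_const C
    have hB : Tendsto (fun s => Real.exp (-(N:ℝ) * s) *
        ∫ x, F (Real.exp ((N:ℝ) * s / 2) * u x) ∂volume) atBot (nhds 0) := by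
      apply tendsto_of_tendsto_of_tendsto_of_le_of_le' tendsto_const_nhds hBub
      · exact Eventually.of_forall fun s => mul_nonneg (Real.exp_nonneg _) (hGnn s)
      · filter_upwards [eventually_le_atBot (0:ℝ)] with s hs
        exact hBbound s hs
    simpa using hA.sub hB
  -- Part 2 : eventually positive at -infty
  have h2 : ∀ᶠ s in atBot, 0 < Ψ s := by
    have h0 : Tendsto (fun s => Real.exp ((κ - N - 2) * s) * C) atBot (nhds 0) := by
      simpa using (texp (κ - N - 2) (by linarith)).mul_const C
    have hev1 : ∀ᶠ s in atBot, Real.exp ((κ - N - 2) * s) * C < D / 2 :=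
      Tendsto.eventually_lt_const (by linarith) h0
    filter_upwards [hev1, eventually_le_atBot (0:ℝ)] with s hs hs0
    rw [hΨval s]
    have f1 := hBbound s hs0
    have f2 : Real.exp ((κ - N) * s) * C
        = Real.exp (2 * s) * (Real.exp ((κ - N - 2) * s) * C) := by
      rw [← mul_assoc, ← Real.exp_add]
      congr 2
      ring
    have f3 := mul_lt_mul_of_pos_left hs (Real.exp_pos (2 * s))
    linarith [Real.exp_pos (2 * s)]
  -- Part 3 : tendsto -infty at +infty
  have h3 : Tendsto Ψ atTop atBot := by
    have hbig : Tendsto (fun s => Real.exp ((κ - N - 2) * s) * C) atTop atTop :=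
      (texpTop _ (by linarith)).atTop_mul_const hCpos
    have hev : ∀ᶠ s in atTop, D / 2 + 1 ≤ Real.exp ((κ - N - 2) * s) * C :=
      hbig.eventually_ge_atTop _
    apply tendsto_atBot_mono' atTop (f₁ := fun s => -Real.exp (2 * s))
    · filter_upwards [hev, eventually_ge_atTop (0:ℝ)] with s hs hs0
      rw [hΨval s]
      have f1 := mul_le_mul_of_nonneg_left (hGlow s hs0) (Real.exp_nonneg (-(N:ℝ) * s))
      have f2 : Real.exp (-(N:ℝ) * s) * (Real.exp (κ * s) * C)
          = Real.exp (2 * s) * (Real.exp ((κ - N - 2) * s) * C) := by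
        rw [← mul_assoc, ← mul_assoc, ← Real.exp_add, ← Real.exp_add]
        congr 2
        ring
      have f3 := mul_le_mul_of_nonneg_left hs (Real.exp_nonneg (2 * s))
      linarith [Real.exp_pos (2 * s)]
    · rw [tendsto_neg_atBot_iff]
      exact texpTop 2 two_pos
  refine ⟨h1, h2, h3, ?_⟩
  -- Part 4 : the maximum is attained
  obtain ⟨a, ha⟩ := h2.exists
  have hev1 : ∀ᶠ s in atBot, Ψ s < Ψ a := Tendsto.eventually_lt_const ha h1
  have hev2 : ∀ᶠ s in atTop, Ψ s < Ψ a := h3.eventually (eventually_lt_atBot (Ψ a))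
  obtain ⟨A, hA2⟩ := eventually_atBot.1 hev1
  obtain ⟨B, hB2⟩ := eventually_atTop.1 hev2
  have hmem : a ∈ Set.Icc (min A a) (max B a) := ⟨min_le_right _ _, le_max_right _ _⟩
  obtain ⟨s0, hs0mem, hs0max⟩ :=
    (isCompact_Icc (a := min A a) (b := max B a)).exists_isMaxOn ⟨a, hmem⟩ hΨcont.continuousOn
  refine ⟨s0, lt_of_lt_of_le ha (hs0max hmem), ?_⟩
  intro s
  rcases le_or_gt s (max B a) with h | h
  · rcases le_or_gt (min A a) s with h' | h'
    · exact hs0max ⟨h', h⟩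
    · have : Ψ s < Ψ a := hA2 s (le_of_lt (lt_of_lt_of_le h' (min_le_left _ _)))
      exact le_trans this.le (hs0max hmem)
  · have : Ψ s < Ψ a := hB2 s (le_of_lt (lt_of_le_of_lt (le_max_left _ _) h))
    exact le_trans this.le (hs0max hmem)
end
end
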